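/- Fix ω ∈ ℝ and c > 0, and define F : ℝ → ℝ by F(z) = −c ∫_{−∞}^0 g(μ + z) · (−μ)^{−1/2} dμ, where g(x) = e^{−(x−ω)²}/(1 − Φ(x−ω)) and Φ(x) = 1 − erfc(x)/2. Then F is well defined, continuous, strictly negative and nonincreasing on ℝ with F(z) → 0 as z → −∞, and the equation z = F(z) has a unique real solution z₀; moreover z₀ < 0. -/

import Mathlib

open MeasureTheory Real Filter

noncomputable def Phi (z : ℝ) : ℝ :=
  (1 / Real.sqrt π) * ∫ t in Set.Iic z, Real.exp (-t ^ 2)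

noncomputable def Fendpoint (ω c : ℝ) (z : ℝ) : ℝ :=
  -c * ∫ μ in Set.Iio (0 : ℝ),
      (Real.exp (-(μ + z - ω) ^ 2) / (1 - Phi (μ + z - ω))) * (-μ) ^ (-(1 : ℝ) / 2)

lemma gauss_integrable : Integrable (fun t : ℝ => Real.exp (-t ^ 2)) := by
  simpa using integrable_exp_neg_mul_sq (b := 1) one_pos

lemma gauss_total : ∫ t : ℝ, Real.exp (-t ^ 2) = Real.sqrt π := by
  simpa using integral_gaussian 1

lemma sqrtpi_pos : 0 < Real.sqrt π := Real.sqrt_pos.2 Real.pi_pos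

lemma one_sub_Phi (x : ℝ) :
    1 - Phi x = (1 / Real.sqrt π) * ∫ t in Set.Ioi x, Real.exp (-t ^ 2) := by
  have h := intervalIntegral.integral_Iic_add_Ioi (b := x) (f := fun t : ℝ => Real.exp (-t ^ 2))
    gauss_integrable.integrableOn gauss_integrable.integrableOn
  rw [gauss_total] at h
  rw [Phi]
  have hπ := sqrtpi_pos.ne'
  field_simp
  linarith [h]

lemma Ioi_gauss_pos (x : ℝ) : 0 < ∫ t in Set.Ioi x, Real.exp (-t ^ 2) := by
  rw [setIntegral_pos_iff_support_of_nonneg_ae]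
  · have : (Function.support fun t : ℝ => Real.exp (-t ^ 2)) = Set.univ := by
      ext t; simp [Function.support, (Real.exp_pos _).ne']
    rw [this, Set.univ_inter]
    simp
  · exact Filter.Eventually.of_forall fun t => (Real.exp_pos _).le
  · exact gauss_integrable.integrableOn

lemma one_sub_Phi_pos (x : ℝ) : 0 < 1 - Phi x := by
  rw [one_sub_Phi]
  exact mul_pos (by positivity) (Ioi_gauss_pos x)

noncomputable def gfun (x : ℝ) : ℝ := Real.exp (-x ^ 2) / (1 - Phi x)

lemma gfun_pos (x : ℝ) : 0 < gfun x := div_pos (Real.exp_pos _) (one_sub_Phi_pos x)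

lemma shift_Ioi (x : ℝ) (f : ℝ → ℝ) :
    ∫ s in Set.Ioi (0 : ℝ), f (s + x) = ∫ t in Set.Ioi x, f t := by
  have h := (measurePreserving_add_right volume x).setIntegral_preimage_emb
    (measurableEmbedding_addRight x) f (Set.Ioi x)
  have hpre : (fun s : ℝ => s + x) ⁻¹' Set.Ioi x = Set.Ioi 0 := by
    ext s; simp
  rwa [hpre] at h

noncomputable def Dfun (x : ℝ) : ℝ := ∫ s in Set.Ioi (0 : ℝ), Real.exp (-s ^ 2 - 2 * x * s)

lemma Dfun_integrand_integrable (x : ℝ) :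
    Integrable (fun s : ℝ => Real.exp (-s ^ 2 - 2 * x * s)) := by
  have h : Integrable (fun s : ℝ => Real.exp (-(s + x) ^ 2)) :=
    (measurePreserving_add_right volume x).integrable_comp_emb
      (measurableEmbedding_addRight x) |>.2 gauss_integrable
  have : (fun s : ℝ => Real.exp (-s ^ 2 - 2 * x * s))
      = fun s : ℝ => Real.exp (x ^ 2) * Real.exp (-(s + x) ^ 2) := by
    funext s; rw [← Real.exp_add]; ring_nf
  rw [this]
  exact h.const_mul _

lemma Dfun_pos (x : ℝ) : 0 < Dfun x := by
  rw [Dfun, setIntegral_pos_iff_support_of_nonneg_ae]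
  · have : (Function.support fun s : ℝ => Real.exp (-s ^ 2 - 2 * x * s)) = Set.univ := by
      ext s; simp [Function.support, (Real.exp_pos _).ne']
    rw [this, Set.univ_inter]
    simp
  · exact Filter.Eventually.of_forall fun t => (Real.exp_pos _).le
  · exact (Dfun_integrand_integrable x).integrableOn

lemma Dfun_anti : Antitone Dfun := by
  intro x y hxy
  refine setIntegral_mono_on (Dfun_integrand_integrable y).integrableOn
    (Dfun_integrand_integrable x).integrableOn measurableSet_Ioi fun s hs => ?_
  have : 0 < s := hs
  apply Real.exp_le_exp.2
  nlinarith

lemma gfun_eq (x : ℝ) : gfun x = Real.sqrt π / Dfun x := by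
  have h1 : 1 - Phi x = (Real.exp (-x ^ 2) / Real.sqrt π) * Dfun x := by
    rw [one_sub_Phi, ← shift_Ioi x (fun t => Real.exp (-t ^ 2))]
    have : ∀ s : ℝ, Real.exp (-(s + x) ^ 2)
        = Real.exp (-x ^ 2) * Real.exp (-s ^ 2 - 2 * x * s) := by
      intro s; rw [← Real.exp_add]; ring_nf
    simp_rw [this]
    rw [MeasureTheory.integral_const_mul, Dfun]
    ring
  rw [gfun, h1]
  have hD := (Dfun_pos x).ne'
  have he := (Real.exp_pos (-x ^ 2)).ne'
  have hs := sqrtpi_pos.ne'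
  field_simp

lemma gfun_mono : Monotone gfun := by
  intro x y hxy
  rw [gfun_eq, gfun_eq]
  exact div_le_div_of_nonneg_left sqrtpi_pos.le (Dfun_pos y) (Dfun_anti hxy)

lemma one_sub_Phi_anti : Antitone (fun x => 1 - Phi x) := by
  intro x y hxy
  simp only [one_sub_Phi]
  refine mul_le_mul_of_nonneg_left ?_ (by positivity)
  refine setIntegral_mono_set gauss_integrable.integrableOn
    (Filter.Eventually.of_forall fun t => (Real.exp_pos _).le) ?_
  exact HasSubset.Subset.eventuallyLE (Set.Ioi_subset_Ioi hxy)

lemma gfun_le {x a : ℝ} (hxa : x ≤ a) : gfun x ≤ Real.exp (-x ^ 2) / (1 - Phi a) :=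
  div_le_div_of_nonneg_left (Real.exp_pos _).le (one_sub_Phi_pos a) (one_sub_Phi_anti hxa)

lemma Phi_cont : Continuous Phi := by
  have key : ∀ x : ℝ, (∫ t in Set.Iic x, Real.exp (-t ^ 2))
      = (∫ t in Set.Iic (0 : ℝ), Real.exp (-t ^ 2)) + ∫ t in (0 : ℝ)..x, Real.exp (-t ^ 2) := by
    intro x
    rw [← intervalIntegral.integral_Iic_sub_Iic gauss_integrable.integrableOn
      gauss_integrable.integrableOn]
    ring
  have hPhi : Phi = fun x => (1 / Real.sqrt π) *
      ((∫ t in Set.Iic (0 : ℝ), Real.exp (-t ^ 2)) + ∫ t in (0 : ℝ)..x, Real.exp (-t ^ 2)) :=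
    funext fun x => by rw [Phi, key]
  rw [hPhi]
  exact continuous_const.mul (continuous_const.add
    (intervalIntegral.continuous_primitive (fun a b => gauss_integrable.intervalIntegrable) 0))

lemma gfun_cont : Continuous gfun := by
  apply Continuous.div
  · exact Real.continuous_exp.comp (continuous_pow 2).neg
  · exact continuous_const.sub Phi_cont
  · exact fun x => (one_sub_Phi_pos x).ne'

lemma gfun_tendsto : Tendsto gfun atBot (nhds 0) := by
  have h0 : Tendsto (fun x : ℝ => Real.exp x / (1 - Phi 0)) atBot (nhds 0) := by
    have := Real.tendsto_exp_atBot.div_const (1 - Phi 0)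
    simpa using this
  refine tendsto_of_tendsto_of_tendsto_of_le_of_le' tendsto_const_nhds h0 ?_ ?_
  · exact Filter.Eventually.of_forall fun x => (gfun_pos x).le
  · filter_upwards [Filter.eventually_le_atBot (-1 : ℝ)] with x hx
    calc gfun x ≤ Real.exp (-x ^ 2) / (1 - Phi 0) := gfun_le (by linarith)
    _ ≤ Real.exp x / (1 - Phi 0) := by
        apply div_le_div_of_nonneg_right ?_ (one_sub_Phi_pos 0).le
        exact Real.exp_le_exp.2 (by nlinarith)

noncomputable def wfun (μ : ℝ) : ℝ := (-μ) ^ (-(1 : ℝ) / 2)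

lemma wfun_contOn : ContinuousOn wfun (Set.Iio 0) := by
  intro μ hμ
  exact ContinuousWithinAt.rpow_const (continuous_neg.continuousWithinAt)
    (Or.inl (by simp only [Set.mem_Iio] at hμ; exact neg_ne_zero.2 hμ.ne))

lemma wfun_aesm : AEStronglyMeasurable wfun (volume.restrict (Set.Iio (0 : ℝ))) :=
  wfun_contOn.aestronglyMeasurable measurableSet_Iio

lemma wfun_nonneg {μ : ℝ} (h : μ < 0) : 0 ≤ wfun μ :=
  (Real.rpow_pos_of_pos (by linarith) _).le

lemma wfun_pos {μ : ℝ} (h : μ < 0) : 0 < wfun μ :=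
  Real.rpow_pos_of_pos (by linarith) _

lemma wfun_integrable_Ioo : IntegrableOn wfun (Set.Ioo (-1 : ℝ) 0) := by
  have h1 : IntegrableOn (fun s : ℝ => s ^ (-(1 : ℝ) / 2)) (Set.Ioo (0 : ℝ) 1) :=
    (intervalIntegral.integrableOn_Ioo_rpow_iff one_pos).2 (by norm_num)
  have h2 := (Measure.measurePreserving_neg (volume : Measure ℝ)).integrableOn_comp_preimage
    (MeasurableEquiv.neg ℝ).measurableEmbedding
    (f := fun s : ℝ => s ^ (-(1 : ℝ) / 2)) (s := Set.Ioo (0 : ℝ) 1)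
  have hpre : (Neg.neg : ℝ → ℝ) ⁻¹' Set.Ioo (0 : ℝ) 1 = Set.Ioo (-1 : ℝ) 0 := by
    ext s
    simp only [Set.mem_preimage, Set.mem_Ioo]
    constructor
    · rintro ⟨h1', h2'⟩; constructor <;> linarith
    · rintro ⟨h1', h2'⟩; constructor <;> linarith
  rw [hpre] at h2
  exact h2.2 h1

lemma wfun_integrable_Ico : IntegrableOn wfun (Set.Ico (-1 : ℝ) 0) :=
  (integrableOn_Ico_iff_integrableOn_Ioo (by simp)).2 wfun_integrable_Ioo

lemma gauss_shift_integrable (a : ℝ) : Integrable (fun μ : ℝ => Real.exp (-(μ + a) ^ 2)) :=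
  (measurePreserving_add_right volume a).integrable_comp_emb
    (measurableEmbedding_addRight a) |>.2 gauss_integrable

lemma base_aesm (a : ℝ) {s : Set ℝ} (hs : s ⊆ Set.Iio 0) :
    AEStronglyMeasurable (fun μ : ℝ => Real.exp (-(μ + a) ^ 2) * wfun μ)
      (volume.restrict s) := by
  have hcont : ContinuousOn (fun μ : ℝ => Real.exp (-(μ + a) ^ 2) * wfun μ) (Set.Iio 0) :=
    ((Real.continuous_exp.comp (by continuity : Continuous fun μ : ℝ =>
      -(μ + a) ^ 2)).continuousOn).mul wfun_contOn
  exact (hcont.aestronglyMeasurable measurableSet_Iio).mono_measure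
    (Measure.restrict_mono hs le_rfl)

lemma base_integrable (a : ℝ) :
    IntegrableOn (fun μ : ℝ => Real.exp (-(μ + a) ^ 2) * wfun μ) (Set.Iio 0) := by
  have hsplit : Set.Iio (0 : ℝ) = Set.Iio (-1 : ℝ) ∪ Set.Ico (-1 : ℝ) 0 := by
    ext s
    simp only [Set.mem_Iio, Set.mem_union, Set.mem_Ico]
    constructor
    · intro h
      rcases lt_or_ge s (-1) with h' | h'
      · exact Or.inl h'
      · exact Or.inr ⟨h', h⟩
    · rintro (h | ⟨-, h⟩) <;> linarith
  rw [hsplit]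
  apply IntegrableOn.union
  · refine Integrable.mono' ((gauss_shift_integrable a).restrict)
      (base_aesm a (fun μ (hμ : μ < -1) => by simp only [Set.mem_Iio]; linarith)) ?_
    rw [ae_restrict_iff' measurableSet_Iio]
    refine Filter.Eventually.of_forall fun μ hμ => ?_
    have hμ' : (μ : ℝ) < -1 := hμ
    have hw1 : wfun μ ≤ 1 :=
      Real.rpow_le_one_of_one_le_of_nonpos (by linarith) (by norm_num)
    have hw0 : 0 ≤ wfun μ := wfun_nonneg (by linarith)
    rw [Real.norm_eq_abs, abs_of_nonneg (mul_nonneg (Real.exp_pos _).le hw0)]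
    calc Real.exp (-(μ + a) ^ 2) * wfun μ ≤ Real.exp (-(μ + a) ^ 2) * 1 :=
          mul_le_mul_of_nonneg_left hw1 (Real.exp_pos _).le
      _ = Real.exp (-(μ + a) ^ 2) := mul_one _
  · refine Integrable.mono' wfun_integrable_Ico
      (base_aesm a (fun μ hμ => by simp only [Set.mem_Iio]; exact hμ.2)) ?_
    rw [ae_restrict_iff' measurableSet_Ico]
    refine Filter.Eventually.of_forall fun μ hμ => ?_
    have hw0 : 0 ≤ wfun μ := wfun_nonneg hμ.2
    rw [Real.norm_eq_abs, abs_of_nonneg (mul_nonneg (Real.exp_pos _).le hw0)]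
    calc Real.exp (-(μ + a) ^ 2) * wfun μ ≤ 1 * wfun μ :=
          mul_le_mul_of_nonneg_right
            (Real.exp_le_one_iff.2 (neg_nonpos.2 (sq_nonneg _))) hw0
      _ = wfun μ := one_mul _

lemma gfun_aesm (ω z : ℝ) {s : Set ℝ} (hs : s ⊆ Set.Iio 0) :
    AEStronglyMeasurable (fun μ : ℝ => gfun (μ + z - ω) * wfun μ)
      (volume.restrict s) := by
  have hcont : ContinuousOn (fun μ : ℝ => gfun (μ + z - ω) * wfun μ) (Set.Iio 0) :=
    ((gfun_cont.comp (by continuity : Continuous fun μ : ℝ => μ + z - ω)).continuousOn).mul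
      wfun_contOn
  exact (hcont.aestronglyMeasurable measurableSet_Iio).mono_measure
    (Measure.restrict_mono hs le_rfl)

lemma integrand_nonneg (ω z : ℝ) {μ : ℝ} (hμ : μ < 0) :
    0 ≤ gfun (μ + z - ω) * wfun μ :=
  mul_nonneg (gfun_pos _).le (wfun_nonneg hμ)

lemma integrand_le (ω : ℝ) {z z' : ℝ} (hzz' : z ≤ z') {μ : ℝ} (hμ : μ < 0) :
    gfun (μ + z - ω) * wfun μ ≤ gfun (μ + z' - ω) * wfun μ :=
  mul_le_mul_of_nonneg_right (gfun_mono (by linarith)) (wfun_nonneg hμ)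

lemma integrand_integrable (ω z : ℝ) :
    IntegrableOn (fun μ : ℝ => gfun (μ + z - ω) * wfun μ) (Set.Iio 0) := by
  have hbnd : IntegrableOn
      (fun μ : ℝ => (1 / (1 - Phi (z - ω))) * (Real.exp (-(μ + (z - ω)) ^ 2) * wfun μ))
      (Set.Iio 0) := (base_integrable (z - ω)).const_mul (1 / (1 - Phi (z - ω)))
  refine Integrable.mono' hbnd (gfun_aesm ω z le_rfl) ?_
  rw [ae_restrict_iff' measurableSet_Iio]
  refine Filter.Eventually.of_forall fun μ hμ => ?_
  have hμ' : (μ : ℝ) < 0 := hμ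
  have hb : gfun (μ + z - ω) ≤ Real.exp (-(μ + z - ω) ^ 2) / (1 - Phi (z - ω)) :=
    gfun_le (by linarith)
  have hw0 : 0 ≤ wfun μ := wfun_nonneg hμ'
  rw [Real.norm_eq_abs, abs_of_nonneg (integrand_nonneg ω z hμ')]
  have : μ + (z - ω) = μ + z - ω := by ring
  rw [this]
  calc gfun (μ + z - ω) * wfun μ
      ≤ (Real.exp (-(μ + z - ω) ^ 2) / (1 - Phi (z - ω))) * wfun μ :=
        mul_le_mul_of_nonneg_right hb hw0
    _ = 1 / (1 - Phi (z - ω)) * (Real.exp (-(μ + z - ω) ^ 2) * wfun μ) := by ring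

noncomputable def Ifun (ω : ℝ) (z : ℝ) : ℝ :=
  ∫ μ in Set.Iio (0 : ℝ), gfun (μ + z - ω) * wfun μ

lemma Ifun_pos (ω z : ℝ) : 0 < Ifun ω z := by
  rw [Ifun, setIntegral_pos_iff_support_of_nonneg_ae]
  · have hsub : Set.Iio (0 : ℝ) ⊆
        (Function.support fun μ => gfun (μ + z - ω) * wfun μ) ∩ Set.Iio 0 := by
      intro μ hμ
      have hμ' : (μ : ℝ) < 0 := hμ
      exact ⟨(mul_pos (gfun_pos _) (wfun_pos hμ')).ne', hμ'⟩
    refine lt_of_lt_of_le ?_ (measure_mono hsub)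
    simp [Real.volume_Iio]
  · exact (ae_restrict_iff' measurableSet_Iio).2
      (Filter.Eventually.of_forall fun μ hμ => integrand_nonneg ω z hμ)
  · exact integrand_integrable ω z

lemma Ifun_mono (ω : ℝ) : Monotone (Ifun ω) := by
  intro z z' hzz'
  exact setIntegral_mono_on (integrand_integrable ω z) (integrand_integrable ω z')
    measurableSet_Iio fun μ hμ => integrand_le ω hzz' hμ

lemma Ifun_cont (ω : ℝ) : Continuous (Ifun ω) := by
  rw [continuous_iff_continuousAt]
  intro z₀
  refine continuousAt_of_dominated
    (F := fun z μ => gfun (μ + z - ω) * wfun μ)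
    (bound := fun μ => gfun (μ + (z₀ + 1) - ω) * wfun μ)
    (Filter.Eventually.of_forall fun z => gfun_aesm ω z le_rfl) ?_
    (integrand_integrable ω (z₀ + 1)) ?_
  · filter_upwards [eventually_le_nhds (lt_add_one z₀)] with z hz
    rw [ae_restrict_iff' measurableSet_Iio]
    refine Filter.Eventually.of_forall fun μ hμ => ?_
    have hμ' : (μ : ℝ) < 0 := hμ
    rw [Real.norm_eq_abs, abs_of_nonneg (integrand_nonneg ω z hμ')]
    exact integrand_le ω hz hμ'
  · refine Filter.Eventually.of_forall fun μ => ?_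
    exact ((gfun_cont.comp (by continuity : Continuous fun z : ℝ =>
      μ + z - ω)).continuousAt).mul continuousAt_const

lemma Ifun_tendsto (ω : ℝ) : Tendsto (Ifun ω) atBot (nhds 0) := by
  have h := tendsto_integral_filter_of_dominated_convergence
    (μ := volume.restrict (Set.Iio (0 : ℝ)))
    (F := fun (z : ℝ) μ => gfun (μ + z - ω) * wfun μ)
    (f := fun _ => (0 : ℝ))
    (bound := fun μ => gfun (μ + 0 - ω) * wfun μ)
    (l := atBot)
    (Filter.Eventually.of_forall fun z => gfun_aesm ω z le_rfl)
    ?_ (integrand_integrable ω 0) ?_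
  · exact (by simpa using h : Tendsto (fun z => ∫ μ in Set.Iio (0 : ℝ), gfun (μ + z - ω) * wfun μ) atBot (nhds 0))
  · filter_upwards [Filter.eventually_le_atBot (0 : ℝ)] with z hz
    rw [ae_restrict_iff' measurableSet_Iio]
    refine Filter.Eventually.of_forall fun μ hμ => ?_
    have hμ' : (μ : ℝ) < 0 := hμ
    rw [Real.norm_eq_abs, abs_of_nonneg (integrand_nonneg ω z hμ')]
    exact integrand_le ω hz hμ'
  · refine Filter.Eventually.of_forall fun μ => ?_
    have h1 : Tendsto (fun z : ℝ => μ + z - ω) atBot atBot := by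
      have := tendsto_atBot_add_const_right atBot (-ω)
        (tendsto_atBot_add_const_left atBot (μ : ℝ) tendsto_id)
      simpa [sub_eq_add_neg] using this
    have h2 : Tendsto (fun z : ℝ => gfun (μ + z - ω)) atBot (nhds 0) :=
      gfun_tendsto.comp h1
    simpa using h2.mul_const (wfun μ)

theorem endpoint_equation (ω c : ℝ) (hc : 0 < c) :
    Continuous (Fendpoint ω c) ∧
    (∀ z : ℝ, Fendpoint ω c z < 0) ∧
    Antitone (Fendpoint ω c) ∧
    Tendsto (Fendpoint ω c) atBot (nhds 0) ∧
    (∃! z₀ : ℝ, z₀ = Fendpoint ω c z₀) ∧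
    (∀ z₀ : ℝ, z₀ = Fendpoint ω c z₀ → z₀ < 0) := by
  have hF : Fendpoint ω c = fun z => -c * Ifun ω z := rfl
  have hcont : Continuous (Fendpoint ω c) := by
    rw [hF]; exact continuous_const.mul (Ifun_cont ω)
  have hneg : ∀ z, Fendpoint ω c z < 0 := fun z => by
    rw [hF]; exact mul_neg_of_neg_of_pos (neg_lt_zero.2 hc) (Ifun_pos ω z)
  have hanti : Antitone (Fendpoint ω c) := by
    intro z z' h
    rw [hF]
    exact mul_le_mul_of_nonpos_left (Ifun_mono ω h) (neg_nonpos.2 hc.le)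
  have htend : Tendsto (Fendpoint ω c) atBot (nhds 0) := by
    rw [hF]
    simpa using (Ifun_tendsto ω).const_mul (-c)
  have hfix_neg : ∀ z₀ : ℝ, z₀ = Fendpoint ω c z₀ → z₀ < 0 := fun z₀ h => by
    rw [h]; exact hneg z₀
  refine ⟨hcont, hneg, hanti, htend, ?_, hfix_neg⟩
  -- existence and uniqueness
  set φ : ℝ → ℝ := fun z => z - Fendpoint ω c z with hφdef
  have hφcont : Continuous φ := continuous_id.sub hcont
  have hφ0 : 0 < φ 0 := by
    simp only [hφdef, zero_sub]
    exact neg_pos.2 (hneg 0)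
  obtain ⟨a, ha1, ha2⟩ : ∃ a : ℝ, -1 < Fendpoint ω c a ∧ a ≤ -2 := by
    have h1 : ∀ᶠ z in atBot, -1 < Fendpoint ω c z :=
      htend.eventually (eventually_gt_nhds (by norm_num : (-1 : ℝ) < 0))
    exact (h1.and (Filter.eventually_le_atBot (-2 : ℝ))).exists
  have hφa : φ a < 0 := by
    simp only [hφdef]
    linarith
  have ha0 : a ≤ 0 := by linarith
  have hmem : (0 : ℝ) ∈ Set.Icc (φ a) (φ 0) := ⟨hφa.le, hφ0.le⟩
  obtain ⟨z₀, -, hz₀⟩ := intermediate_value_Icc ha0 hφcont.continuousOn hmem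
  have hz₀eq : z₀ = Fendpoint ω c z₀ := by
    have : z₀ - Fendpoint ω c z₀ = 0 := hz₀
    linarith
  refine ⟨z₀, hz₀eq, fun y hy => ?_⟩
  rcases le_total y z₀ with h | h
  · refine le_antisymm h ?_
    calc z₀ = Fendpoint ω c z₀ := hz₀eq
      _ ≤ Fendpoint ω c y := hanti h
      _ = y := hy.symm
  · refine le_antisymm ?_ h
    calc y = Fendpoint ω c y := hy
      _ ≤ Fendpoint ω c z₀ := hanti h
      _ = z₀ := hz₀eq.symm
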